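/- Let m ≥ 1 and for δ ≥ 0 let U(δ) = (-δ,δ)^m ⊂ ℝ^m. Then for all a, b ≥ 0, the sum over nonzero j ∈ ℤ^m of the Lebesgue measure of U(a) ∩ (U(b) + j) is at most C·(ab)^m for a constant C depending only on m. -/

import Mathlib

open MeasureTheory ENNReal

open Set in
theorem stmt3 (m : ℕ) (hm : 1 ≤ m) :
    ∃ C : ℝ, 0 < C ∧ ∀ a b : ℝ, 0 ≤ a → 0 ≤ b →
      ∑' j : {j : Fin m → ℤ // j ≠ 0},
          volume {x : Fin m → ℝ | (∀ i, |x i| < a) ∧ ∀ i, |x i - (j.1 i : ℝ)| < b} ≤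
        ENNReal.ofReal (C * (a * b) ^ m) := by
  refine ⟨12 ^ m, by positivity, fun a b ha hb => ?_⟩
  set f : (Fin m → ℤ) → ℝ≥0∞ := fun j =>
    volume {x : Fin m → ℝ | (∀ i, |x i| < a) ∧ ∀ i, |x i - (j i : ℝ)| < b} with hf
  have hempty : ∀ j : Fin m → ℤ, ∀ i, a + b ≤ |(j i : ℝ)| → f j = 0 := by
    intro j i hi
    have hset : {x : Fin m → ℝ | (∀ i, |x i| < a) ∧ ∀ i, |x i - (j i : ℝ)| < b} = ∅ := by
      ext x
      simp only [mem_setOf_eq, mem_empty_iff_false, iff_false, not_and]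
      intro h1 h2
      have e1 : |x i| < a := h1 i
      have e2 : |x i - (j i : ℝ)| < b := h2 i
      have : |(j i : ℝ)| ≤ |x i| + |x i - (j i : ℝ)| := by
        have := abs_sub (x i) (x i - (j i : ℝ))
        simpa using this
      linarith
    simp [hf, hset]
  rcases le_or_gt (a + b) 1 with hab | hab
  · have hz : ∀ j : {j : Fin m → ℤ // j ≠ 0}, f j.1 = 0 := by
      rintro ⟨j, hj⟩
      obtain ⟨i, hi⟩ := Function.ne_iff.mp hj
      apply hempty j i
      have h1 : (1 : ℤ) ≤ |j i| := Int.one_le_abs (by simpa using hi)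
      have : (1 : ℝ) ≤ |(j i : ℝ)| := by
        rw [← Int.cast_abs]; exact_mod_cast h1
      linarith
    calc ∑' j : {j : Fin m → ℤ // j ≠ 0}, f j.1 = 0 := by
          simp only [hz, tsum_zero]
      _ ≤ _ := zero_le
  · set N : ℕ := ⌊a + b⌋₊ with hN
    set S : Finset (Fin m → ℤ) := Fintype.piFinset (fun _ => Finset.Icc (-(N : ℤ)) N) with hS
    have hcard : S.card = (2 * N + 1) ^ m := by
      rw [hS, Fintype.card_piFinset]
      have : (Finset.Icc (-(N : ℤ)) N).card = 2 * N + 1 := by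
        rw [Int.card_Icc]; omega
      simp [this]
    have hsupp : ∀ j ∉ S, f j = 0 := by
      intro j hj
      rw [hS, Fintype.mem_piFinset] at hj
      push_neg at hj
      obtain ⟨i, hi⟩ := hj
      apply hempty j i
      rw [Finset.mem_Icc] at hi
      have h1 : (N : ℤ) < |j i| := by
        rcases abs_cases (j i) with ⟨he, _⟩ | ⟨he, _⟩ <;> omega
      have h2 : ((N : ℝ) + 1) ≤ |(j i : ℝ)| := by
        rw [← Int.cast_abs]
        exact_mod_cast h1
      have h3 : a + b < N + 1 := Nat.lt_floor_add_one (a + b)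
      linarith
    have hterm : ∀ j : Fin m → ℤ, f j ≤ ENNReal.ofReal (2 * min a b) ^ m := by
      intro j
      rcases le_total a b with h | h
      · rw [min_eq_left h]
        calc f j ≤ volume (Set.pi univ fun _ : Fin m => Ioo (-a) a) := by
              apply measure_mono
              intro x hx i _
              exact ⟨(abs_lt.mp (hx.1 i)).1, (abs_lt.mp (hx.1 i)).2⟩
          _ = ∏ _i : Fin m, volume (Ioo (-a) a) := volume_pi_pi _
          _ = ENNReal.ofReal (2 * a) ^ m := by
              simp [Real.volume_Ioo]
              norm_num
              ring_nf
              rw [ENNReal.ofReal_mul ha, mul_pow, ENNReal.ofReal_ofNat]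
          _ = ENNReal.ofReal (2 * a) ^ m := rfl
      · rw [min_eq_right h]
        calc f j ≤ volume (Set.pi univ fun i : Fin m => Ioo ((j i : ℝ) - b) ((j i : ℝ) + b)) := by
              apply measure_mono
              intro x hx i _
              have := abs_lt.mp (hx.2 i)
              exact ⟨by linarith [this.1], by linarith [this.2]⟩
          _ = ∏ i : Fin m, volume (Ioo ((j i : ℝ) - b) ((j i : ℝ) + b)) := volume_pi_pi _
          _ = ENNReal.ofReal (2 * b) ^ m := by
              simp [Real.volume_Ioo]
              ring_nf
              rw [ENNReal.ofReal_mul hb, mul_pow, ENNReal.ofReal_ofNat]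
    have hmain : ∑' j : {j : Fin m → ℤ // j ≠ 0}, f j.1 ≤ ∑' j, f j := by
      exact ENNReal.tsum_comp_le_tsum_of_injective Subtype.coe_injective f
    have hfin : (∑' j, f j) ≤ (S.card : ℝ≥0∞) * ENNReal.ofReal (2 * min a b) ^ m := by
      rw [tsum_eq_sum hsupp]
      calc ∑ j ∈ S, f j ≤ ∑ _j ∈ S, ENNReal.ofReal (2 * min a b) ^ m :=
            Finset.sum_le_sum fun j _ => hterm j
        _ = (S.card : ℝ≥0∞) * ENNReal.ofReal (2 * min a b) ^ m := by
            rw [Finset.sum_const, nsmul_eq_mul]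
    refine (hmain.trans hfin).trans ?_
    have hmn : 0 ≤ 2 * min a b := by positivity
    rw [hcard, ← ENNReal.ofReal_pow hmn, ← ENNReal.ofReal_natCast, ← ENNReal.ofReal_mul (by positivity)]
    apply ENNReal.ofReal_le_ofReal
    push_cast
    have key : ((2 * N + 1 : ℝ)) * (2 * min a b) ≤ 12 * (a * b) := by
      have h1 : (N : ℝ) ≤ a + b := Nat.floor_le (by linarith)
      have h2 : a + b ≤ 2 * max a b := by
        rcases le_total a b with h | h
        · simp [max_eq_right h]; linarith
        · simp [max_eq_left h]; linarith
      have h3 : min a b * max a b = a * b := min_mul_max a b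
      have h4 : 0 ≤ min a b := le_min ha hb
      nlinarith [le_max_left a b, le_max_right a b]
    calc ((2 * N + 1 : ℝ)) ^ m * (2 * min a b) ^ m
        = (((2 * N + 1 : ℝ)) * (2 * min a b)) ^ m := (mul_pow _ _ _).symm
      _ ≤ (12 * (a * b)) ^ m := pow_le_pow_left₀ (by positivity) key m
      _ = 12 ^ m * (a * b) ^ m := mul_pow _ _ _
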